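/- The sequential predictive scheme reproduces the order-compatible prior: for every interval partition π of {1,2,3,4}, Π_ω(π) = ∏_{j=2}^{4} c_j(π), where c_j(π) = a_j(π) if j lies in the same block as j−1 in π and c_j(π) = 1 − a_j(π) otherwise, and the tie probabilities are a₂(π) = (ω²+3ω+6)/((ω+2)(ω²+ω+3)); a₃(π) = (2ω+6)/(ω²+3ω+6) if 1 and 2 lie in the same block of π and a₃(π) = (ω+2)/(ω²+2ω+2) otherwise; a₄(π) = 3/(ω+3) if 1, 2, 3 lie in the same block of π, a₄(π) = 2/(ω+2) if 2 and 3 lie in the same block but 1 does not, and a₄(π) = 1/(ω+1) if 2 and 3 lie in different blocks of π. -/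

import Mathlib

open Finset
open scoped Classical

/-- Set partitions of `{1,2,3,4}`, modeled as finpartitions of `univ : Finset (Fin 4)`
(the element `i ∈ {1,2,3,4}` corresponds to `i - 1 : Fin 4`). -/
abbrev Part4 := Finpartition (Finset.univ : Finset (Fin 4))

/-- A partition is an interval partition if each of its blocks is a set of
consecutive integers. -/
def IsIntervalPart (π : Part4) : Prop :=
  ∀ b ∈ π.parts, ∀ i ∈ b, ∀ j ∈ b, ∀ k : Fin 4, i ≤ k → k ≤ j → k ∈ b

/-- The order-compatible weight `w_ω(π) = ω^(k-1) * ∏ (nᵢ - 1)!` for interval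
partitions `π` with `k` blocks of sizes `n₁, …, n_k`, and `0` otherwise. -/
noncomputable def wt (ω : ℝ) (π : Part4) : ℝ :=
  if IsIntervalPart π then
    ω ^ (π.parts.card - 1) * ∏ b ∈ π.parts, ((b.card - 1).factorial : ℝ)
  else 0

/-- The normalizing constant `Z(ω) = ∑_π w_ω(π)`. -/
noncomputable def Z (ω : ℝ) : ℝ := ∑ π : Part4, wt ω π

/-- The order-compatible prior probability of an event `E`:
`Π_ω(E) = (∑_{π ∈ E} w_ω(π)) / Z(ω)`. -/
noncomputable def Pr (ω : ℝ) (E : Part4 → Prop) : ℝ :=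
  (∑ π ∈ Finset.univ.filter E, wt ω π) / Z ω

/-- Conditional probability `Π_ω(A ∣ B) = Π_ω(A ∩ B) / Π_ω(B)`. -/
noncomputable def PrCond (ω : ℝ) (A B : Part4 → Prop) : ℝ :=
  Pr ω (fun π => A π ∧ B π) / Pr ω B

/-- The event that elements `i` and `j` lie in the same block of `π`. -/
def same (i j : Fin 4) (π : Part4) : Prop := ∃ b ∈ π.parts, i ∈ b ∧ j ∈ b

/-- The tie probability `a₂(ω) = (ω²+3ω+6)/((ω+2)(ω²+ω+3))` for `2` joining the
block of `1`. -/
noncomputable def a2 (ω : ℝ) : ℝ := (ω ^ 2 + 3 * ω + 6) / ((ω + 2) * (ω ^ 2 + ω + 3))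

/-- The tie probability `a₃(ω, π)` for `3` joining the block of `2`. -/
noncomputable def a3 (ω : ℝ) (π : Part4) : ℝ :=
  if same 0 1 π then (2 * ω + 6) / (ω ^ 2 + 3 * ω + 6)
  else (ω + 2) / (ω ^ 2 + 2 * ω + 2)

/-- The tie probability `a₄(ω, π)` for `4` joining the block of `3`. -/
noncomputable def a4 (ω : ℝ) (π : Part4) : ℝ :=
  if same 0 1 π ∧ same 1 2 π then 3 / (ω + 3)
  else if same 1 2 π then 2 / (ω + 2)
  else 1 / (ω + 1)

/-- The factor `c_j(π)`: the tie probability `a` if the relevant tie holds in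
`π`, and `1 - a` otherwise. -/
noncomputable def cfac (a : ℝ) (tie : Prop) : ℝ := if tie then a else 1 - a

def mkP (s : Finset (Finset (Fin 4))) (h1 : s.SupIndep id) (h2 : s.sup id = Finset.univ)
    (h3 : ⊥ ∉ s) : Part4 := ⟨s, h1, h2, h3⟩

lemma same_iff_mem_part (π : Part4) (x y : Fin 4) : same x y π ↔ y ∈ π.part x := by
  constructor
  · rintro ⟨b, hb, hx, hy⟩
    rwa [π.part_eq_of_mem hb hx]
  · intro h
    exact ⟨π.part x, π.part_mem.2 (mem_univ x), π.mem_part (mem_univ x), h⟩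

lemma same_refl (π : Part4) (x : Fin 4) : same x x π :=
  ⟨π.part x, π.part_mem.2 (mem_univ x), π.mem_part (mem_univ x), π.mem_part (mem_univ x)⟩

lemma same_symm {π : Part4} {x y : Fin 4} (h : same x y π) : same y x π := by
  obtain ⟨b, hb, hx, hy⟩ := h; exact ⟨b, hb, hy, hx⟩

lemma same_trans {π : Part4} {x y z : Fin 4} (h : same x y π) (h' : same y z π) :
    same x z π := by
  obtain ⟨b, hb, hx, hy⟩ := h
  obtain ⟨c, hc, hy', hz⟩ := h'
  exact ⟨b, hb, hx, (π.eq_of_mem_parts hb hc hy hy') ▸ hz⟩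

lemma btw {π : Part4} (hπ : IsIntervalPart π) {i j : Fin 4} (h : same i j π) (k : Fin 4)
    (hik : i ≤ k) (hkj : k ≤ j) : same i k π ∧ same k j π := by
  obtain ⟨b, hb, hi, hj⟩ := h
  have hk := hπ b hb i hi j hj k hik hkj
  exact ⟨⟨b, hb, hi, hk⟩, ⟨b, hb, hk, hj⟩⟩

lemma same02 {π : Part4} (hπ : IsIntervalPart π) (h : same 0 2 π) :
    same 0 1 π ∧ same 1 2 π := btw hπ h 1 (by decide) (by decide)

lemma same13 {π : Part4} (hπ : IsIntervalPart π) (h : same 1 3 π) :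
    same 1 2 π ∧ same 2 3 π := btw hπ h 2 (by decide) (by decide)

lemma same03 {π : Part4} (hπ : IsIntervalPart π) (h : same 0 3 π) :
    same 0 1 π ∧ same 1 2 π ∧ same 2 3 π := by
  obtain ⟨h01, h13⟩ := btw hπ h 1 (by decide) (by decide)
  exact ⟨h01, same13 hπ h13⟩

lemma part_eq (π : Part4) (x : Fin 4) (c : Finset (Fin 4))
    (h : ∀ y : Fin 4, same x y π ↔ y ∈ c) : π.part x = c := by
  ext y
  rw [← same_iff_mem_part, h]

lemma parts_eq_image (π : Part4) : π.parts = Finset.image π.part Finset.univ := by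
  ext b
  simp only [Finset.mem_image, mem_univ, true_and]
  constructor
  · intro hb
    obtain ⟨x, hx⟩ := π.nonempty_of_mem_parts hb
    exact ⟨x, π.part_eq_of_mem hb hx⟩
  · rintro ⟨x, rfl⟩
    exact π.part_mem.2 (mem_univ x)

def Pttt : Part4 := mkP {{0, 1, 2, 3}} (by decide) (by decide) (by decide)

def Pttf : Part4 := mkP {{0, 1, 2}, {3}} (by decide) (by decide) (by decide)

def Ptft : Part4 := mkP {{0, 1}, {2, 3}} (by decide) (by decide) (by decide)

def Ptff : Part4 := mkP {{0, 1}, {2}, {3}} (by decide) (by decide) (by decide)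

def Pftt : Part4 := mkP {{0}, {1, 2, 3}} (by decide) (by decide) (by decide)

def Pftf : Part4 := mkP {{0}, {1, 2}, {3}} (by decide) (by decide) (by decide)

def Pfft : Part4 := mkP {{0}, {1}, {2, 3}} (by decide) (by decide) (by decide)

def Pfff : Part4 := mkP {{0}, {1}, {2}, {3}} (by decide) (by decide) (by decide)

lemma int_Pttt : IsIntervalPart Pttt := by unfold IsIntervalPart; decide

lemma int_Pttf : IsIntervalPart Pttf := by unfold IsIntervalPart; decide

lemma int_Ptft : IsIntervalPart Ptft := by unfold IsIntervalPart; decide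

lemma int_Ptff : IsIntervalPart Ptff := by unfold IsIntervalPart; decide

lemma int_Pftt : IsIntervalPart Pftt := by unfold IsIntervalPart; decide

lemma int_Pftf : IsIntervalPart Pftf := by unfold IsIntervalPart; decide

lemma int_Pfft : IsIntervalPart Pfft := by unfold IsIntervalPart; decide

lemma int_Pfff : IsIntervalPart Pfff := by unfold IsIntervalPart; decide

lemma t1_Pttt : same 0 1 Pttt := by unfold same; decide

lemma t2_Pttt : same 1 2 Pttt := by unfold same; decide

lemma t3_Pttt : same 2 3 Pttt := by unfold same; decide

lemma t1_Pttf : same 0 1 Pttf := by unfold same; decide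

lemma t2_Pttf : same 1 2 Pttf := by unfold same; decide

lemma t3_Pttf : ¬ same 2 3 Pttf := by unfold same; decide

lemma t1_Ptft : same 0 1 Ptft := by unfold same; decide

lemma t2_Ptft : ¬ same 1 2 Ptft := by unfold same; decide

lemma t3_Ptft : same 2 3 Ptft := by unfold same; decide

lemma t1_Ptff : same 0 1 Ptff := by unfold same; decide

lemma t2_Ptff : ¬ same 1 2 Ptff := by unfold same; decide

lemma t3_Ptff : ¬ same 2 3 Ptff := by unfold same; decide

lemma t1_Pftt : ¬ same 0 1 Pftt := by unfold same; decide

lemma t2_Pftt : same 1 2 Pftt := by unfold same; decide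

lemma t3_Pftt : same 2 3 Pftt := by unfold same; decide

lemma t1_Pftf : ¬ same 0 1 Pftf := by unfold same; decide

lemma t2_Pftf : same 1 2 Pftf := by unfold same; decide

lemma t3_Pftf : ¬ same 2 3 Pftf := by unfold same; decide

lemma t1_Pfft : ¬ same 0 1 Pfft := by unfold same; decide

lemma t2_Pfft : ¬ same 1 2 Pfft := by unfold same; decide

lemma t3_Pfft : same 2 3 Pfft := by unfold same; decide

lemma t1_Pfff : ¬ same 0 1 Pfff := by unfold same; decide

lemma t2_Pfff : ¬ same 1 2 Pfff := by unfold same; decide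

lemma t3_Pfff : ¬ same 2 3 Pfff := by unfold same; decide

lemma c4_Pttt : same 0 1 Pttt ∧ same 1 2 Pttt := ⟨t1_Pttt, t2_Pttt⟩

lemma c4_Pttf : same 0 1 Pttf ∧ same 1 2 Pttf := ⟨t1_Pttf, t2_Pttf⟩

lemma c4_Ptft : ¬ (same 0 1 Ptft ∧ same 1 2 Ptft) := fun h => t2_Ptft h.2

lemma c4_Ptff : ¬ (same 0 1 Ptff ∧ same 1 2 Ptff) := fun h => t2_Ptff h.2

lemma c4_Pftt : ¬ (same 0 1 Pftt ∧ same 1 2 Pftt) := fun h => t1_Pftt h.1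

lemma c4_Pftf : ¬ (same 0 1 Pftf ∧ same 1 2 Pftf) := fun h => t1_Pftf h.1

lemma c4_Pfft : ¬ (same 0 1 Pfft ∧ same 1 2 Pfft) := fun h => t1_Pfft h.1

lemma c4_Pfff : ¬ (same 0 1 Pfff ∧ same 1 2 Pfff) := fun h => t1_Pfff h.1

lemma classify_ttt (π : Part4) (hπ : IsIntervalPart π)
    (h1 : same 0 1 π) (h2 : same 1 2 π) (h3 : same 2 3 π) : π = Pttt := by
  have q02 : same 0 2 π := same_trans h1 h2
  have q13 : same 1 3 π := same_trans h2 h3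
  have q03 : same 0 3 π := same_trans (same_trans h1 h2) h3
  have q10 : same 1 0 π := same_symm h1
  have q21 : same 2 1 π := same_symm h2
  have q32 : same 3 2 π := same_symm h3
  have q20 : same 2 0 π := same_symm q02
  have q31 : same 3 1 π := same_symm q13
  have q30 : same 3 0 π := same_symm q03
  apply Finpartition.ext
  have e0 : π.part 0 = ({0, 1, 2, 3} : Finset (Fin 4)) := part_eq π 0 _ (by
    intro y; fin_cases y <;> simp [same_refl, h1, q02, q03])
  have e1 : π.part 1 = ({0, 1, 2, 3} : Finset (Fin 4)) := part_eq π 1 _ (by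
    intro y; fin_cases y <;> simp [same_refl, q10, h2, q13])
  have e2 : π.part 2 = ({0, 1, 2, 3} : Finset (Fin 4)) := part_eq π 2 _ (by
    intro y; fin_cases y <;> simp [same_refl, q20, q21, h3])
  have e3 : π.part 3 = ({0, 1, 2, 3} : Finset (Fin 4)) := part_eq π 3 _ (by
    intro y; fin_cases y <;> simp [same_refl, q30, q31, q32])
  rw [parts_eq_image π]
  ext b
  simp only [Finset.mem_image, Finset.mem_univ, true_and]
  constructor
  · rintro ⟨x, rfl⟩
    fin_cases x <;> simp [e0, e1, e2, e3, Pttt, mkP]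
  · intro hb
    simp only [Pttt, mkP, Finset.mem_singleton] at hb
    subst hb
    exact ⟨0, e0⟩

lemma classify_ttf (π : Part4) (hπ : IsIntervalPart π)
    (h1 : same 0 1 π) (h2 : same 1 2 π) (h3 : ¬ same 2 3 π) : π = Pttf := by
  have q02 : same 0 2 π := same_trans h1 h2
  have q13 : ¬ same 1 3 π := fun h => h3 (same13 hπ h).2
  have q03 : ¬ same 0 3 π := fun h => h3 (same03 hπ h).2.2
  have q10 : same 1 0 π := same_symm h1
  have q21 : same 2 1 π := same_symm h2
  have q32 : ¬ same 3 2 π := fun h => h3 (same_symm h)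
  have q20 : same 2 0 π := same_symm q02
  have q31 : ¬ same 3 1 π := fun h => q13 (same_symm h)
  have q30 : ¬ same 3 0 π := fun h => q03 (same_symm h)
  apply Finpartition.ext
  have e0 : π.part 0 = ({0, 1, 2} : Finset (Fin 4)) := part_eq π 0 _ (by
    intro y; fin_cases y <;> simp [same_refl, h1, q02, q03])
  have e1 : π.part 1 = ({0, 1, 2} : Finset (Fin 4)) := part_eq π 1 _ (by
    intro y; fin_cases y <;> simp [same_refl, q10, h2, q13])
  have e2 : π.part 2 = ({0, 1, 2} : Finset (Fin 4)) := part_eq π 2 _ (by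
    intro y; fin_cases y <;> simp [same_refl, q20, q21, h3])
  have e3 : π.part 3 = ({3} : Finset (Fin 4)) := part_eq π 3 _ (by
    intro y; fin_cases y <;> simp [same_refl, q30, q31, q32])
  rw [parts_eq_image π]
  ext b
  simp only [Finset.mem_image, Finset.mem_univ, true_and]
  constructor
  · rintro ⟨x, rfl⟩
    fin_cases x <;> simp [e0, e1, e2, e3, Pttf, mkP]
  · intro hb
    simp only [Pttf, mkP, Finset.mem_insert, Finset.mem_singleton] at hb
    rcases hb with rfl | rfl
    exacts [⟨0, e0⟩, ⟨3, e3⟩]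

lemma classify_tft (π : Part4) (hπ : IsIntervalPart π)
    (h1 : same 0 1 π) (h2 : ¬ same 1 2 π) (h3 : same 2 3 π) : π = Ptft := by
  have q02 : ¬ same 0 2 π := fun h => h2 (same02 hπ h).2
  have q13 : ¬ same 1 3 π := fun h => h2 (same13 hπ h).1
  have q03 : ¬ same 0 3 π := fun h => h2 (same03 hπ h).2.1
  have q10 : same 1 0 π := same_symm h1
  have q21 : ¬ same 2 1 π := fun h => h2 (same_symm h)
  have q32 : same 3 2 π := same_symm h3
  have q20 : ¬ same 2 0 π := fun h => q02 (same_symm h)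
  have q31 : ¬ same 3 1 π := fun h => q13 (same_symm h)
  have q30 : ¬ same 3 0 π := fun h => q03 (same_symm h)
  apply Finpartition.ext
  have e0 : π.part 0 = ({0, 1} : Finset (Fin 4)) := part_eq π 0 _ (by
    intro y; fin_cases y <;> simp [same_refl, h1, q02, q03])
  have e1 : π.part 1 = ({0, 1} : Finset (Fin 4)) := part_eq π 1 _ (by
    intro y; fin_cases y <;> simp [same_refl, q10, h2, q13])
  have e2 : π.part 2 = ({2, 3} : Finset (Fin 4)) := part_eq π 2 _ (by
    intro y; fin_cases y <;> simp [same_refl, q20, q21, h3])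
  have e3 : π.part 3 = ({2, 3} : Finset (Fin 4)) := part_eq π 3 _ (by
    intro y; fin_cases y <;> simp [same_refl, q30, q31, q32])
  rw [parts_eq_image π]
  ext b
  simp only [Finset.mem_image, Finset.mem_univ, true_and]
  constructor
  · rintro ⟨x, rfl⟩
    fin_cases x <;> simp [e0, e1, e2, e3, Ptft, mkP]
  · intro hb
    simp only [Ptft, mkP, Finset.mem_insert, Finset.mem_singleton] at hb
    rcases hb with rfl | rfl
    exacts [⟨0, e0⟩, ⟨2, e2⟩]

lemma classify_tff (π : Part4) (hπ : IsIntervalPart π)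
    (h1 : same 0 1 π) (h2 : ¬ same 1 2 π) (h3 : ¬ same 2 3 π) : π = Ptff := by
  have q02 : ¬ same 0 2 π := fun h => h2 (same02 hπ h).2
  have q13 : ¬ same 1 3 π := fun h => h2 (same13 hπ h).1
  have q03 : ¬ same 0 3 π := fun h => h2 (same03 hπ h).2.1
  have q10 : same 1 0 π := same_symm h1
  have q21 : ¬ same 2 1 π := fun h => h2 (same_symm h)
  have q32 : ¬ same 3 2 π := fun h => h3 (same_symm h)
  have q20 : ¬ same 2 0 π := fun h => q02 (same_symm h)
  have q31 : ¬ same 3 1 π := fun h => q13 (same_symm h)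
  have q30 : ¬ same 3 0 π := fun h => q03 (same_symm h)
  apply Finpartition.ext
  have e0 : π.part 0 = ({0, 1} : Finset (Fin 4)) := part_eq π 0 _ (by
    intro y; fin_cases y <;> simp [same_refl, h1, q02, q03])
  have e1 : π.part 1 = ({0, 1} : Finset (Fin 4)) := part_eq π 1 _ (by
    intro y; fin_cases y <;> simp [same_refl, q10, h2, q13])
  have e2 : π.part 2 = ({2} : Finset (Fin 4)) := part_eq π 2 _ (by
    intro y; fin_cases y <;> simp [same_refl, q20, q21, h3])
  have e3 : π.part 3 = ({3} : Finset (Fin 4)) := part_eq π 3 _ (by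
    intro y; fin_cases y <;> simp [same_refl, q30, q31, q32])
  rw [parts_eq_image π]
  ext b
  simp only [Finset.mem_image, Finset.mem_univ, true_and]
  constructor
  · rintro ⟨x, rfl⟩
    fin_cases x <;> simp [e0, e1, e2, e3, Ptff, mkP]
  · intro hb
    simp only [Ptff, mkP, Finset.mem_insert, Finset.mem_singleton] at hb
    rcases hb with rfl | rfl | rfl
    exacts [⟨0, e0⟩, ⟨2, e2⟩, ⟨3, e3⟩]

lemma classify_ftt (π : Part4) (hπ : IsIntervalPart π)
    (h1 : ¬ same 0 1 π) (h2 : same 1 2 π) (h3 : same 2 3 π) : π = Pftt := by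
  have q02 : ¬ same 0 2 π := fun h => h1 (same02 hπ h).1
  have q13 : same 1 3 π := same_trans h2 h3
  have q03 : ¬ same 0 3 π := fun h => h1 (same03 hπ h).1
  have q10 : ¬ same 1 0 π := fun h => h1 (same_symm h)
  have q21 : same 2 1 π := same_symm h2
  have q32 : same 3 2 π := same_symm h3
  have q20 : ¬ same 2 0 π := fun h => q02 (same_symm h)
  have q31 : same 3 1 π := same_symm q13
  have q30 : ¬ same 3 0 π := fun h => q03 (same_symm h)
  apply Finpartition.ext
  have e0 : π.part 0 = ({0} : Finset (Fin 4)) := part_eq π 0 _ (by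
    intro y; fin_cases y <;> simp [same_refl, h1, q02, q03])
  have e1 : π.part 1 = ({1, 2, 3} : Finset (Fin 4)) := part_eq π 1 _ (by
    intro y; fin_cases y <;> simp [same_refl, q10, h2, q13])
  have e2 : π.part 2 = ({1, 2, 3} : Finset (Fin 4)) := part_eq π 2 _ (by
    intro y; fin_cases y <;> simp [same_refl, q20, q21, h3])
  have e3 : π.part 3 = ({1, 2, 3} : Finset (Fin 4)) := part_eq π 3 _ (by
    intro y; fin_cases y <;> simp [same_refl, q30, q31, q32])
  rw [parts_eq_image π]
  ext b
  simp only [Finset.mem_image, Finset.mem_univ, true_and]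
  constructor
  · rintro ⟨x, rfl⟩
    fin_cases x <;> simp [e0, e1, e2, e3, Pftt, mkP]
  · intro hb
    simp only [Pftt, mkP, Finset.mem_insert, Finset.mem_singleton] at hb
    rcases hb with rfl | rfl
    exacts [⟨0, e0⟩, ⟨1, e1⟩]

lemma classify_ftf (π : Part4) (hπ : IsIntervalPart π)
    (h1 : ¬ same 0 1 π) (h2 : same 1 2 π) (h3 : ¬ same 2 3 π) : π = Pftf := by
  have q02 : ¬ same 0 2 π := fun h => h1 (same02 hπ h).1
  have q13 : ¬ same 1 3 π := fun h => h3 (same13 hπ h).2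
  have q03 : ¬ same 0 3 π := fun h => h1 (same03 hπ h).1
  have q10 : ¬ same 1 0 π := fun h => h1 (same_symm h)
  have q21 : same 2 1 π := same_symm h2
  have q32 : ¬ same 3 2 π := fun h => h3 (same_symm h)
  have q20 : ¬ same 2 0 π := fun h => q02 (same_symm h)
  have q31 : ¬ same 3 1 π := fun h => q13 (same_symm h)
  have q30 : ¬ same 3 0 π := fun h => q03 (same_symm h)
  apply Finpartition.ext
  have e0 : π.part 0 = ({0} : Finset (Fin 4)) := part_eq π 0 _ (by
    intro y; fin_cases y <;> simp [same_refl, h1, q02, q03])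
  have e1 : π.part 1 = ({1, 2} : Finset (Fin 4)) := part_eq π 1 _ (by
    intro y; fin_cases y <;> simp [same_refl, q10, h2, q13])
  have e2 : π.part 2 = ({1, 2} : Finset (Fin 4)) := part_eq π 2 _ (by
    intro y; fin_cases y <;> simp [same_refl, q20, q21, h3])
  have e3 : π.part 3 = ({3} : Finset (Fin 4)) := part_eq π 3 _ (by
    intro y; fin_cases y <;> simp [same_refl, q30, q31, q32])
  rw [parts_eq_image π]
  ext b
  simp only [Finset.mem_image, Finset.mem_univ, true_and]
  constructor
  · rintro ⟨x, rfl⟩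
    fin_cases x <;> simp [e0, e1, e2, e3, Pftf, mkP]
  · intro hb
    simp only [Pftf, mkP, Finset.mem_insert, Finset.mem_singleton] at hb
    rcases hb with rfl | rfl | rfl
    exacts [⟨0, e0⟩, ⟨1, e1⟩, ⟨3, e3⟩]

lemma classify_fft (π : Part4) (hπ : IsIntervalPart π)
    (h1 : ¬ same 0 1 π) (h2 : ¬ same 1 2 π) (h3 : same 2 3 π) : π = Pfft := by
  have q02 : ¬ same 0 2 π := fun h => h1 (same02 hπ h).1
  have q13 : ¬ same 1 3 π := fun h => h2 (same13 hπ h).1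
  have q03 : ¬ same 0 3 π := fun h => h1 (same03 hπ h).1
  have q10 : ¬ same 1 0 π := fun h => h1 (same_symm h)
  have q21 : ¬ same 2 1 π := fun h => h2 (same_symm h)
  have q32 : same 3 2 π := same_symm h3
  have q20 : ¬ same 2 0 π := fun h => q02 (same_symm h)
  have q31 : ¬ same 3 1 π := fun h => q13 (same_symm h)
  have q30 : ¬ same 3 0 π := fun h => q03 (same_symm h)
  apply Finpartition.ext
  have e0 : π.part 0 = ({0} : Finset (Fin 4)) := part_eq π 0 _ (by
    intro y; fin_cases y <;> simp [same_refl, h1, q02, q03])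
  have e1 : π.part 1 = ({1} : Finset (Fin 4)) := part_eq π 1 _ (by
    intro y; fin_cases y <;> simp [same_refl, q10, h2, q13])
  have e2 : π.part 2 = ({2, 3} : Finset (Fin 4)) := part_eq π 2 _ (by
    intro y; fin_cases y <;> simp [same_refl, q20, q21, h3])
  have e3 : π.part 3 = ({2, 3} : Finset (Fin 4)) := part_eq π 3 _ (by
    intro y; fin_cases y <;> simp [same_refl, q30, q31, q32])
  rw [parts_eq_image π]
  ext b
  simp only [Finset.mem_image, Finset.mem_univ, true_and]
  constructor
  · rintro ⟨x, rfl⟩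
    fin_cases x <;> simp [e0, e1, e2, e3, Pfft, mkP]
  · intro hb
    simp only [Pfft, mkP, Finset.mem_insert, Finset.mem_singleton] at hb
    rcases hb with rfl | rfl | rfl
    exacts [⟨0, e0⟩, ⟨1, e1⟩, ⟨2, e2⟩]

lemma classify_fff (π : Part4) (hπ : IsIntervalPart π)
    (h1 : ¬ same 0 1 π) (h2 : ¬ same 1 2 π) (h3 : ¬ same 2 3 π) : π = Pfff := by
  have q02 : ¬ same 0 2 π := fun h => h1 (same02 hπ h).1
  have q13 : ¬ same 1 3 π := fun h => h2 (same13 hπ h).1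
  have q03 : ¬ same 0 3 π := fun h => h1 (same03 hπ h).1
  have q10 : ¬ same 1 0 π := fun h => h1 (same_symm h)
  have q21 : ¬ same 2 1 π := fun h => h2 (same_symm h)
  have q32 : ¬ same 3 2 π := fun h => h3 (same_symm h)
  have q20 : ¬ same 2 0 π := fun h => q02 (same_symm h)
  have q31 : ¬ same 3 1 π := fun h => q13 (same_symm h)
  have q30 : ¬ same 3 0 π := fun h => q03 (same_symm h)
  apply Finpartition.ext
  have e0 : π.part 0 = ({0} : Finset (Fin 4)) := part_eq π 0 _ (by
    intro y; fin_cases y <;> simp [same_refl, h1, q02, q03])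
  have e1 : π.part 1 = ({1} : Finset (Fin 4)) := part_eq π 1 _ (by
    intro y; fin_cases y <;> simp [same_refl, q10, h2, q13])
  have e2 : π.part 2 = ({2} : Finset (Fin 4)) := part_eq π 2 _ (by
    intro y; fin_cases y <;> simp [same_refl, q20, q21, h3])
  have e3 : π.part 3 = ({3} : Finset (Fin 4)) := part_eq π 3 _ (by
    intro y; fin_cases y <;> simp [same_refl, q30, q31, q32])
  rw [parts_eq_image π]
  ext b
  simp only [Finset.mem_image, Finset.mem_univ, true_and]
  constructor
  · rintro ⟨x, rfl⟩
    fin_cases x <;> simp [e0, e1, e2, e3, Pfff, mkP]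
  · intro hb
    simp only [Pfff, mkP, Finset.mem_insert, Finset.mem_singleton] at hb
    rcases hb with rfl | rfl | rfl | rfl
    exacts [⟨0, e0⟩, ⟨1, e1⟩, ⟨2, e2⟩, ⟨3, e3⟩]

lemma wt_eq (ω : ℝ) (π : Part4) (h : IsIntervalPart π) (k m : ℕ)
    (hk : π.parts.card = k) (hm : ∏ b ∈ π.parts, (b.card - 1).factorial = m) :
    wt ω π = ω ^ (k - 1) * m := by
  rw [wt, if_pos h, hk, ← Nat.cast_prod, hm]

lemma wt_Pttt (ω : ℝ) : wt ω Pttt = ω ^ (1 - 1) * (6 : ℕ) :=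
  wt_eq ω Pttt int_Pttt 1 6 (by decide) (by decide)

lemma wt_Pttf (ω : ℝ) : wt ω Pttf = ω ^ (2 - 1) * (2 : ℕ) :=
  wt_eq ω Pttf int_Pttf 2 2 (by decide) (by decide)

lemma wt_Ptft (ω : ℝ) : wt ω Ptft = ω ^ (2 - 1) * (1 : ℕ) :=
  wt_eq ω Ptft int_Ptft 2 1 (by decide) (by decide)

lemma wt_Ptff (ω : ℝ) : wt ω Ptff = ω ^ (3 - 1) * (1 : ℕ) :=
  wt_eq ω Ptff int_Ptff 3 1 (by decide) (by decide)

lemma wt_Pftt (ω : ℝ) : wt ω Pftt = ω ^ (2 - 1) * (2 : ℕ) :=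
  wt_eq ω Pftt int_Pftt 2 2 (by decide) (by decide)

lemma wt_Pftf (ω : ℝ) : wt ω Pftf = ω ^ (3 - 1) * (1 : ℕ) :=
  wt_eq ω Pftf int_Pftf 3 1 (by decide) (by decide)

lemma wt_Pfft (ω : ℝ) : wt ω Pfft = ω ^ (3 - 1) * (1 : ℕ) :=
  wt_eq ω Pfft int_Pfft 3 1 (by decide) (by decide)

lemma wt_Pfff (ω : ℝ) : wt ω Pfff = ω ^ (4 - 1) * (1 : ℕ) :=
  wt_eq ω Pfff int_Pfff 4 1 (by decide) (by decide)

lemma Zval (ω : ℝ) : Z ω = ω ^ 3 + 3 * ω ^ 2 + 5 * ω + 6 := by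
  have hne : ∀ (A B : Part4), A.parts ≠ B.parts → A ≠ B := fun A B h e => h (congrArg Finpartition.parts e)
  have hfilter : (Finset.univ.filter IsIntervalPart : Finset Part4) = {Pttt, Pttf, Ptft, Ptff, Pftt, Pftf, Pfft, Pfff} := by
    ext π
    simp only [Finset.mem_filter, Finset.mem_univ, true_and, Finset.mem_insert, Finset.mem_singleton]
    constructor
    · intro hπ
      by_cases h1 : same 0 1 π <;> by_cases h2 : same 1 2 π <;> by_cases h3 : same 2 3 π
      · exact Or.inl (classify_ttt π hπ h1 h2 h3)
      · exact Or.inr (Or.inl (classify_ttf π hπ h1 h2 h3))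
      · exact Or.inr (Or.inr (Or.inl (classify_tft π hπ h1 h2 h3)))
      · exact Or.inr (Or.inr (Or.inr (Or.inl (classify_tff π hπ h1 h2 h3))))
      · exact Or.inr (Or.inr (Or.inr (Or.inr (Or.inl (classify_ftt π hπ h1 h2 h3)))))
      · exact Or.inr (Or.inr (Or.inr (Or.inr (Or.inr (Or.inl (classify_ftf π hπ h1 h2 h3))))))
      · exact Or.inr (Or.inr (Or.inr (Or.inr (Or.inr (Or.inr (Or.inl (classify_fft π hπ h1 h2 h3)))))))
      · exact Or.inr (Or.inr (Or.inr (Or.inr (Or.inr (Or.inr (Or.inr (classify_fff π hπ h1 h2 h3)))))))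
    · rintro (rfl | rfl | rfl | rfl | rfl | rfl | rfl | rfl)
      exacts [int_Pttt, int_Pttf, int_Ptft, int_Ptff, int_Pftt, int_Pftf, int_Pfft, int_Pfff]
  have hz : Z ω = ∑ π ∈ Finset.univ.filter IsIntervalPart, wt ω π := by
    rw [Z, Finset.sum_filter_of_ne]
    intro π _ h
    by_contra hc
    exact h (by rw [wt, if_neg hc])
  rw [hz, hfilter]
  rw [Finset.sum_insert (by
    intro hmem
    simp only [Finset.mem_insert, Finset.mem_singleton] at hmem
    rcases hmem with h | h | h | h | h | h | h <;> exact absurd h (hne _ _ (by decide)))]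
  rw [Finset.sum_insert (by
    intro hmem
    simp only [Finset.mem_insert, Finset.mem_singleton] at hmem
    rcases hmem with h | h | h | h | h | h <;> exact absurd h (hne _ _ (by decide)))]
  rw [Finset.sum_insert (by
    intro hmem
    simp only [Finset.mem_insert, Finset.mem_singleton] at hmem
    rcases hmem with h | h | h | h | h <;> exact absurd h (hne _ _ (by decide)))]
  rw [Finset.sum_insert (by
    intro hmem
    simp only [Finset.mem_insert, Finset.mem_singleton] at hmem
    rcases hmem with h | h | h | h <;> exact absurd h (hne _ _ (by decide)))]
  rw [Finset.sum_insert (by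
    intro hmem
    simp only [Finset.mem_insert, Finset.mem_singleton] at hmem
    rcases hmem with h | h | h <;> exact absurd h (hne _ _ (by decide)))]
  rw [Finset.sum_insert (by
    intro hmem
    simp only [Finset.mem_insert, Finset.mem_singleton] at hmem
    rcases hmem with h | h <;> exact absurd h (hne _ _ (by decide)))]
  rw [Finset.sum_insert (by
    intro hmem
    simp only [Finset.mem_insert, Finset.mem_singleton] at hmem
    exact absurd hmem (hne _ _ (by decide)))]
  rw [Finset.sum_singleton]
  rw [wt_Pttt, wt_Pttf, wt_Ptft, wt_Ptff, wt_Pftt, wt_Pftf, wt_Pfft, wt_Pfff]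
  push_cast
  ring

/-- The sequential predictive scheme reproduces the order-compatible prior:
for every interval partition `π` of `{1,2,3,4}`,
`Π_ω(π) = c₂(π) · c₃(π) · c₄(π)`. -/
theorem predictive_scheme (ω : ℝ) (hω : 0 < ω) (π : Part4) (hπ : IsIntervalPart π) :
    wt ω π / Z ω =
      cfac (a2 ω) (same 0 1 π) * cfac (a3 ω π) (same 1 2 π) *
        cfac (a4 ω π) (same 2 3 π) := by
  have n1 : ω + 1 ≠ 0 := by nlinarith
  have n2 : ω + 2 ≠ 0 := by nlinarith
  have n3 : ω + 3 ≠ 0 := by nlinarith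
  have nq1 : ω ^ 2 + ω + 3 ≠ 0 := by nlinarith [sq_nonneg ω]
  have nq2 : ω ^ 2 + 2 * ω + 2 ≠ 0 := by nlinarith [sq_nonneg ω]
  have nq3 : ω ^ 2 + 3 * ω + 6 ≠ 0 := by nlinarith [sq_nonneg ω]
  have nZ : ω ^ 3 + 3 * ω ^ 2 + 5 * ω + 6 ≠ 0 := by nlinarith [pow_pos hω 3, sq_nonneg ω]
  by_cases h1 : same 0 1 π <;> by_cases h2 : same 1 2 π <;> by_cases h3 : same 2 3 π
  · rw [classify_ttt π hπ h1 h2 h3, Zval, wt_Pttt]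
    simp only [cfac, a2, a3, a4, if_pos t1_Pttt, if_pos t2_Pttt, if_pos c4_Pttt, if_pos t3_Pttt]
    push_cast
    field_simp
    ring
  · rw [classify_ttf π hπ h1 h2 h3, Zval, wt_Pttf]
    simp only [cfac, a2, a3, a4, if_pos t1_Pttf, if_pos t2_Pttf, if_pos c4_Pttf, if_neg t3_Pttf]
    push_cast
    field_simp
    ring
  · rw [classify_tft π hπ h1 h2 h3, Zval, wt_Ptft]
    simp only [cfac, a2, a3, a4, if_pos t1_Ptft, if_neg t2_Ptft, if_neg c4_Ptft, if_neg t2_Ptft, if_pos t3_Ptft]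
    push_cast
    field_simp
    ring
  · rw [classify_tff π hπ h1 h2 h3, Zval, wt_Ptff]
    simp only [cfac, a2, a3, a4, if_pos t1_Ptff, if_neg t2_Ptff, if_neg c4_Ptff, if_neg t2_Ptff, if_neg t3_Ptff]
    push_cast
    field_simp
    ring
  · rw [classify_ftt π hπ h1 h2 h3, Zval, wt_Pftt]
    simp only [cfac, a2, a3, a4, if_neg t1_Pftt, if_pos t2_Pftt, if_neg c4_Pftt, if_pos t2_Pftt, if_pos t3_Pftt]
    push_cast
    field_simp
    ring
  · rw [classify_ftf π hπ h1 h2 h3, Zval, wt_Pftf]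
    simp only [cfac, a2, a3, a4, if_neg t1_Pftf, if_pos t2_Pftf, if_neg c4_Pftf, if_pos t2_Pftf, if_neg t3_Pftf]
    push_cast
    field_simp
    ring
  · rw [classify_fft π hπ h1 h2 h3, Zval, wt_Pfft]
    simp only [cfac, a2, a3, a4, if_neg t1_Pfft, if_neg t2_Pfft, if_neg c4_Pfft, if_neg t2_Pfft, if_pos t3_Pfft]
    push_cast
    field_simp
    ring
  · rw [classify_fff π hπ h1 h2 h3, Zval, wt_Pfff]
    simp only [cfac, a2, a3, a4, if_neg t1_Pfff, if_neg t2_Pfff, if_neg c4_Pfff, if_neg t2_Pfff, if_neg t3_Pfff]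
    push_cast
    field_simp
    ring
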